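/- For every integer T ≥ 2 and every real δ such that sin((δ+π)/(2T)) ≠ 0 and sin((δ−π)/(2T)) ≠ 0, the magnitude of the amplitude satisfies |α_T(δ)| = (√2 / T) · sin(π/(2T)) · |cos(δ/(2T)) · cos(δ/2)| / ( |sin((δ+π)/(2T))| · |sin((δ−π)/(2T))| ). -/

import Mathlib

open Complex Finset in
private lemma key1 (w : ℂ) : Complex.exp (2*w*I) - 1 = 2*I*Complex.exp (w*I)*Complex.sin w := by
  rw [show (2:ℂ)*w*I = w*I + w*I by ring, Complex.exp_add, Complex.exp_mul_I]
  linear_combination Complex.sin_sq_add_cos_sq w - Complex.sin w ^ 2 * Complex.I_mul_I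

open Complex in
private lemma hsin' (z : ℂ) : 2*I*Complex.sin z = Complex.exp (z*I) - Complex.exp (-z*I) := by
  rw [Complex.exp_mul_I, show -z*I = (-z)*I by ring, Complex.exp_mul_I, Complex.cos_neg,
    Complex.sin_neg]
  ring

open Complex in
private lemma expI_add (x y : ℝ) : Complex.exp ((x:ℂ)*I) * Complex.exp ((y:ℂ)*I)
    = Complex.exp (((x+y : ℝ):ℂ)*I) := by
  rw [← Complex.exp_add]; push_cast; ring_nf

open Complex in
private lemma eI (w : ℝ) : Complex.exp ((w:ℂ)*I) * I = Complex.exp (((w + Real.pi/2 : ℝ):ℂ)*I) := by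
  have hI2 : Complex.exp (((Real.pi/2 : ℝ):ℂ)*I) = I := by
    rw [Complex.exp_mul_I]; push_cast; simp
  rw [← expI_add, hI2]

open Complex in
private lemma eI' (w : ℝ) : Complex.exp ((w:ℂ)*I) * (-I)
    = Complex.exp (((w + -(Real.pi/2) : ℝ):ℂ)*I) := by
  have hI3 : Complex.exp (((-(Real.pi/2) : ℝ):ℂ)*I) = -I := by
    rw [Complex.exp_mul_I]; push_cast; simp
  rw [← expI_add, hI3]

/-- The post-QPE amplitude function `α_T(δ) = (√2/T) ∑_{τ=0}^{T-1} sin(π(τ+1/2)/T) e^{iδτ/T}`. -/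
noncomputable def amp (T : ℕ) (δ : ℝ) : ℂ :=
  (Real.sqrt 2 / T) * ∑ τ ∈ Finset.range T,
    (Real.sin (Real.pi * (τ + 1 / 2) / T) : ℂ) * Complex.exp (Complex.I * δ * τ / T)

open Complex Finset in
set_option maxHeartbeats 1000000 in
theorem stmt_1 (T : ℕ) (hT : 2 ≤ T) (δ : ℝ)
    (h1 : Real.sin ((δ + Real.pi) / (2 * T)) ≠ 0)
    (h2 : Real.sin ((δ - Real.pi) / (2 * T)) ≠ 0) :
    ‖amp T δ‖ =
      Real.sqrt 2 / T * Real.sin (Real.pi / (2 * T)) *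
        |Real.cos (δ / (2 * T)) * Real.cos (δ / 2)| /
        (|Real.sin ((δ + Real.pi) / (2 * T))| * |Real.sin ((δ - Real.pi) / (2 * T))|) := by
  have hT0 : ((T:ℝ)) ≠ 0 := by positivity
  have hTC : ((T:ℂ)) ≠ 0 := Nat.cast_ne_zero.2 (by omega)
  set A : ℝ := (δ + Real.pi) / (2 * T) with hA
  set B : ℝ := (δ - Real.pi) / (2 * T) with hB
  set S : ℂ := ∑ τ ∈ Finset.range T,
    (Real.sin (Real.pi * (τ + 1 / 2) / T) : ℂ) * Complex.exp (Complex.I * δ * τ / T) with hS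
  -- step 1: the sum as combination of two geometric series
  have hsum : 2*I*S = Complex.exp (((Real.pi/(2*T):ℝ):ℂ)*I) * ∑ τ ∈ range T, Complex.exp (2*(A:ℂ)*I)^τ
      - Complex.exp (((-(Real.pi/(2*T)):ℝ):ℂ)*I) * ∑ τ ∈ range T, Complex.exp (2*(B:ℂ)*I)^τ := by
    rw [hS, Finset.mul_sum, Finset.mul_sum, Finset.mul_sum, ← Finset.sum_sub_distrib]
    refine Finset.sum_congr rfl fun τ _ => ?_
    rw [← Complex.exp_nat_mul, ← Complex.exp_nat_mul, ← Complex.exp_add, ← Complex.exp_add,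
      Complex.ofReal_sin]
    have hh1 : ((Real.pi * (τ + 1 / 2) / T : ℝ) : ℂ) * I + Complex.I * δ * τ / T
        = ((Real.pi/(2*T):ℝ):ℂ)*I + τ * (2*(A:ℂ)*I) := by push_cast [hA]; field_simp; ring
    have hh2 : -(((Real.pi * (τ + 1 / 2) / T : ℝ) : ℂ)) * I + Complex.I * δ * τ / T
        = ((-(Real.pi/(2*T)):ℝ):ℂ)*I + τ * (2*(B:ℂ)*I) := by push_cast [hB]; field_simp; ring
    calc 2*I*((Complex.sin ((Real.pi * (τ + 1 / 2) / T : ℝ))) * Complex.exp (Complex.I * δ * τ / T))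
        = (Complex.exp (((Real.pi * (τ + 1 / 2) / T : ℝ):ℂ)*I)
            - Complex.exp (-((Real.pi * (τ + 1 / 2) / T : ℝ):ℂ)*I)) * Complex.exp (Complex.I * δ * τ / T) := by
          rw [← hsin' (((Real.pi * (τ + 1 / 2) / T : ℝ)):ℂ)]; ring
      _ = Complex.exp (((Real.pi * (τ + 1 / 2) / T : ℝ):ℂ)*I + Complex.I * δ * τ / T)
          - Complex.exp (-((Real.pi * (τ + 1 / 2) / T : ℝ):ℂ)*I + Complex.I * δ * τ / T) := by
          rw [Complex.exp_add, Complex.exp_add]; ring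
      _ = _ := by rw [hh1, hh2]
  -- step 2: geometric sums
  have hgp : (∑ τ ∈ range T, Complex.exp (2*(A:ℂ)*I)^τ) * (Complex.exp (2*(A:ℂ)*I) - 1)
      = Complex.exp (2*(A:ℂ)*I)^T - 1 := geom_sum_mul _ T
  have hgm : (∑ τ ∈ range T, Complex.exp (2*(B:ℂ)*I)^τ) * (Complex.exp (2*(B:ℂ)*I) - 1)
      = Complex.exp (2*(B:ℂ)*I)^T - 1 := geom_sum_mul _ T
  have e1 : 2*I*S * ((Complex.exp (2*(A:ℂ)*I) - 1)*(Complex.exp (2*(B:ℂ)*I) - 1))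
      = Complex.exp (((Real.pi/(2*T):ℝ):ℂ)*I) * (Complex.exp (2*(A:ℂ)*I)^T - 1) * (Complex.exp (2*(B:ℂ)*I) - 1)
      - Complex.exp (((-(Real.pi/(2*T)):ℝ):ℂ)*I) * (Complex.exp (2*(B:ℂ)*I)^T - 1) * (Complex.exp (2*(A:ℂ)*I) - 1) := by
    linear_combination ((Complex.exp (2*(A:ℂ)*I) - 1)*(Complex.exp (2*(B:ℂ)*I) - 1))*hsum
      + Complex.exp (((Real.pi/(2*T):ℝ):ℂ)*I)*(Complex.exp (2*(B:ℂ)*I) - 1)*hgp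
      - Complex.exp (((-(Real.pi/(2*T)):ℝ):ℂ)*I)*(Complex.exp (2*(A:ℂ)*I) - 1)*hgm
  -- step 3: closed forms
  have h3p : Complex.exp (2*(A:ℂ)*I) - 1 = 2*I*Complex.exp ((A:ℂ)*I)*(Real.sin A : ℂ) := by
    rw [key1, Complex.ofReal_sin]
  have h3m : Complex.exp (2*(B:ℂ)*I) - 1 = 2*I*Complex.exp ((B:ℂ)*I)*(Real.sin B : ℂ) := by
    rw [key1, Complex.ofReal_sin]
  have h4p : Complex.exp (2*(A:ℂ)*I)^T - 1
      = 2*I*Complex.exp ((((δ+Real.pi)/2 : ℝ):ℂ)*I)*(Real.cos (δ/2) : ℂ) := by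
    rw [← Complex.exp_nat_mul, show (T:ℂ)*(2*(A:ℂ)*I) = 2*(((δ+Real.pi)/2 : ℝ):ℂ)*I by
      push_cast [hA]; field_simp, key1, ← Complex.ofReal_sin,
      show (δ+Real.pi)/2 = δ/2 + Real.pi/2 by ring, Real.sin_add_pi_div_two]
  have h4m : Complex.exp (2*(B:ℂ)*I)^T - 1
      = -(2*I*Complex.exp ((((δ-Real.pi)/2 : ℝ):ℂ)*I)*(Real.cos (δ/2) : ℂ)) := by
    rw [← Complex.exp_nat_mul, show (T:ℂ)*(2*(B:ℂ)*I) = 2*(((δ-Real.pi)/2 : ℝ):ℂ)*I by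
      push_cast [hB]; field_simp, key1, ← Complex.ofReal_sin,
      show (δ-Real.pi)/2 = δ/2 - Real.pi/2 by ring, Real.sin_sub_pi_div_two]
    push_cast; ring
  rw [h3p, h3m, h4p, h4m] at e1
  -- step 4: exponential product identities
  have p1 : Complex.exp (((Real.pi/(2*T):ℝ):ℂ)*I) * Complex.exp ((((δ+Real.pi)/2 : ℝ):ℂ)*I)
        * Complex.exp ((B:ℂ)*I)
      = Complex.exp ((((δ/2 - δ/(2*T)):ℝ):ℂ)*I) * Complex.exp ((A:ℂ)*I) * Complex.exp ((B:ℂ)*I) * I := by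
    rw [expI_add, expI_add]
    rw [show Complex.exp ((((δ/2 - δ/(2*T)):ℝ):ℂ)*I) * Complex.exp ((A:ℂ)*I) * Complex.exp ((B:ℂ)*I) * I
      = Complex.exp (((δ/2 - δ/(2*T) + A + B + Real.pi/2 : ℝ):ℂ)*I) by rw [expI_add, expI_add, eI]]
    rw [show (Real.pi/(2*(T:ℝ)) + (δ+Real.pi)/2 + B) = (δ/2 - δ/(2*(T:ℝ)) + A + B + Real.pi/2) by
      rw [hA, hB]; field_simp; ring]
  have p2 : Complex.exp (((-(Real.pi/(2*T)):ℝ):ℂ)*I) * Complex.exp ((((δ-Real.pi)/2 : ℝ):ℂ)*I)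
        * Complex.exp ((A:ℂ)*I)
      = Complex.exp ((((δ/2 - δ/(2*T)):ℝ):ℂ)*I) * Complex.exp ((A:ℂ)*I) * Complex.exp ((B:ℂ)*I) * (-I) := by
    rw [expI_add, expI_add]
    rw [show Complex.exp ((((δ/2 - δ/(2*T)):ℝ):ℂ)*I) * Complex.exp ((A:ℂ)*I) * Complex.exp ((B:ℂ)*I) * (-I)
      = Complex.exp (((δ/2 - δ/(2*T) + A + B + -(Real.pi/2) : ℝ):ℂ)*I) by rw [expI_add, expI_add, eI']]
    rw [show (-(Real.pi/(2*(T:ℝ))) + (δ-Real.pi)/2 + A) = (δ/2 - δ/(2*(T:ℝ)) + A + B + -(Real.pi/2)) by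
      rw [hA, hB]; field_simp; ring]
  -- step 5: real trig identity
  have h6 : Real.sin B - Real.sin A = -(2 * Real.cos (δ/(2*T)) * Real.sin (Real.pi/(2*T))) := by
    rw [Real.sin_sub_sin, show (B - A)/2 = -(Real.pi/(2*(T:ℝ))) by rw [hA, hB]; field_simp; ring,
      show (B + A)/2 = δ/(2*(T:ℝ)) by rw [hA, hB]; field_simp; ring, Real.sin_neg]
    ring
  have h6c : (Real.sin B : ℂ) - (Real.sin A : ℂ)
      = -(2 * (Real.cos (δ/(2*T)) : ℂ) * (Real.sin (Real.pi/(2*T)) : ℂ)) := by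
    exact_mod_cast congrArg (fun x : ℝ => (x:ℂ)) h6
  -- step 6: the key identity
  have hne : (-8*I*Complex.exp ((A:ℂ)*I)*Complex.exp ((B:ℂ)*I)) ≠ 0 := by
    simp [Complex.exp_ne_zero, Complex.I_ne_zero]
  have key : S * (Real.sin A : ℂ) * (Real.sin B : ℂ)
      = -(Complex.exp ((((δ/2 - δ/(2*T)):ℝ):ℂ)*I))
        * ((Real.cos (δ/(2*T)) : ℂ) * (Real.cos (δ/2) : ℂ) * (Real.sin (Real.pi/(2*T)) : ℂ)) := by
    refine mul_left_cancel₀ hne ?_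
    linear_combination e1
      + (4*I^2*(Real.cos (δ/2) : ℂ)*(Real.sin B : ℂ))*p1
      + (4*I^2*(Real.cos (δ/2) : ℂ)*(Real.sin A : ℂ))*p2
      + (4*I^3*(Real.cos (δ/2) : ℂ)*Complex.exp ((((δ/2 - δ/(2*T)):ℝ):ℂ)*I)
          *Complex.exp ((A:ℂ)*I)*Complex.exp ((B:ℂ)*I))*h6c
      + ((-8)*I*S*Complex.exp ((A:ℂ)*I)*Complex.exp ((B:ℂ)*I)*(Real.sin A : ℂ)*(Real.sin B : ℂ)
          + (-8)*I*(Real.cos (δ/2) : ℂ)*Complex.exp ((((δ/2 - δ/(2*T)):ℝ):ℂ)*I)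
            *Complex.exp ((A:ℂ)*I)*Complex.exp ((B:ℂ)*I)*(Real.cos (δ/(2*T)) : ℂ)
            *(Real.sin (Real.pi/(2*T)) : ℂ))*Complex.I_mul_I
  -- step 7: take absolute values
  have hsp : 0 < Real.sin (Real.pi/(2*T)) := by
    apply Real.sin_pos_of_pos_of_lt_pi
    · positivity
    · rw [div_lt_iff₀ (by positivity)]
      have h2' : (2:ℝ) ≤ (T:ℝ) := by exact_mod_cast hT
      have h1' : (1:ℝ) < 2*(T:ℝ) := by linarith
      exact lt_mul_of_one_lt_right Real.pi_pos h1'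
  have habs := congrArg (‖·‖) key
  simp only [norm_mul, norm_neg, Complex.norm_real, Real.norm_eq_abs,
    Complex.norm_exp_ofReal_mul_I, one_mul] at habs
  -- habs : |S| * |sin A| * |sin B| = |cos(δ/(2T))| * |cos(δ/2)| * |sin(π/(2T))|
  have hampabs : ‖amp T δ‖ = Real.sqrt 2 / T * ‖S‖ := by
    rw [amp, ← hS, norm_mul, norm_div, Complex.norm_real, Real.norm_eq_abs, Complex.norm_natCast,
      _root_.abs_of_nonneg (Real.sqrt_nonneg 2)]
  rw [hampabs]
  rw [abs_of_pos hsp] at habs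
  have hA1 : |Real.sin A| ≠ 0 := abs_ne_zero.2 h1
  have hB1 : |Real.sin B| ≠ 0 := abs_ne_zero.2 h2
  have hprod : |Real.sin A| * |Real.sin B| ≠ 0 := mul_ne_zero hA1 hB1
  have hSval : ‖S‖
      = |Real.cos (δ/(2*T))| * |Real.cos (δ/2)| * Real.sin (Real.pi/(2*T))
        / (|Real.sin A| * |Real.sin B|) := by
    rw [eq_div_iff hprod]; linear_combination habs
  rw [hSval, abs_mul]; ring
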